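/- Let Σ₁, …, Σ_{n−1} ∈ R be the unique elements satisfying n·f(x)·g(x) = ((x+1)^n + Σ_{i=1}^{n−1} (−1)^i Σ_i (x+1)^{n−i}) − (x^n + Σ_{i=1}^{n−1} (−1)^i Σ_i x^{n−i}) in R[x], and set Σ_n = S. Then Σ₁, …, Σ_n are algebraically independent over ℂ; equivalently, the ℂ-algebra homomorphism from the polynomial ring ℂ[y₁, …, y_n] to R sending y_i to Σ_i is injective. -/

import Mathlib

set_option synthInstance.maxHeartbeats 1000000
set_option maxHeartbeats 1000000

noncomputable section

open Polynomial

/-- The polynomial ring `R = ℂ[f₁, …, f_l, g₁, …, g_{n−l−1}, S]` in `n` indeterminates. -/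
abbrev Rring (n l : ℕ) := MvPolynomial (Fin l ⊕ Fin (n - l - 1) ⊕ Unit) ℂ

/-- `f(x) = x^l + Σ_{i=1}^l f_i x^{l−i} ∈ R[x]`. -/
def fpol (n l : ℕ) : Polynomial (Rring n l) :=
  X ^ l + ∑ i : Fin l, C (MvPolynomial.X (Sum.inl i)) * X ^ (l - 1 - (i : ℕ))

/-- `g(x) = x^{n−l−1} + Σ_{i=1}^{n−l−1} g_i x^{n−l−1−i} ∈ R[x]`. -/
def gpol (n l : ℕ) : Polynomial (Rring n l) :=
  X ^ (n - l - 1) + ∑ i : Fin (n - l - 1), C (MvPolynomial.X (Sum.inr (Sum.inl i))) * X ^ (n - l - 2 - (i : ℕ))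

/-- The last indeterminate `S` of `R`. -/
def Svar (n l : ℕ) : Rring n l := MvPolynomial.X (Sum.inr (Sum.inr ()))

/-- The defining identity for `Σ₁, …, Σ_{n−1} ∈ R`:
`n·f(x)·g(x) = ((x+1)^n + Σ_{i=1}^{n−1} (−1)^i Σ_i (x+1)^{n−i}) − (x^n + Σ_{i=1}^{n−1} (−1)^i Σ_i x^{n−i})`. -/
def sigmaEq (n l : ℕ) (Sig : Fin (n - 1) → Rring n l) : Prop :=
  (n : Polynomial (Rring n l)) * fpol n l * gpol n l =
    ((X + 1) ^ n + ∑ i : Fin (n - 1), C ((-1 : Rring n l) ^ ((i : ℕ) + 1) * Sig i) * (X + 1) ^ (n - ((i : ℕ) + 1)))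
    - (X ^ n + ∑ i : Fin (n - 1), C ((-1 : Rring n l) ^ ((i : ℕ) + 1) * Sig i) * X ^ (n - ((i : ℕ) + 1)))


/-- Matrix of the linear system relating `Σ` to coefficients of `f*g`. -/
def Amat (n : ℕ) : Matrix (Fin (n-1)) (Fin (n-1)) ℂ :=
  fun k i => (-1 : ℂ)^((i:ℕ)+1) *
    (((n - ((i:ℕ)+1)).choose (n - 2 - (k:ℕ)) : ℂ) - if (i:ℕ) = (k:ℕ)+1 then 1 else 0)

def Bmat (n : ℕ) : Matrix (Fin (n-1)) (Fin (n-1)) ℂ := (Amat n)⁻¹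

lemma Amat_tri (n : ℕ) {k i : Fin (n-1)} (hki : k < i) : Amat n k i = 0 := by
  have hk : (k:ℕ) < n - 1 := k.isLt
  have hi : (i:ℕ) < n - 1 := i.isLt
  have hki' : (k:ℕ) < (i:ℕ) := hki
  rcases eq_or_lt_of_le (Nat.succ_le_of_lt hki') with he | hlt
  · -- i = k+1
    have h1 : (i:ℕ) = (k:ℕ)+1 := he.symm
    have h2 : n - ((i:ℕ)+1) = n - 2 - (k:ℕ) := by omega
    have h4 : n - ((k:ℕ)+1+1) = n - 2 - (k:ℕ) := by omega
    simp [Amat, h1, h4, Nat.choose_self]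
  · -- i > k+1
    have h1 : ¬ ((i:ℕ) = (k:ℕ)+1) := by omega
    have h2 : n - ((i:ℕ)+1) < n - 2 - (k:ℕ) := by omega
    simp [Amat, h1, Nat.choose_eq_zero_of_lt h2]

lemma Amat_diag (n : ℕ) (hn : 2 ≤ n) (k : Fin (n-1)) :
    Amat n k k = (-1 : ℂ)^((k:ℕ)+1) * ((n - 1 - (k:ℕ) : ℕ) : ℂ) := by
  have hk : (k:ℕ) < n - 1 := k.isLt
  have h1 : ¬ ((k:ℕ) = (k:ℕ)+1) := by omega
  have h2 : n - ((k:ℕ)+1) = (n - 2 - (k:ℕ)) + 1 := by omega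
  have h3 : n - 1 - (k:ℕ) = (n - 2 - (k:ℕ)) + 1 := by omega
  simp [Amat, h1, h2, h3, Nat.choose_succ_self_right]

lemma Amat_det_ne_zero (n : ℕ) (hn : 2 ≤ n) : (Amat n).det ≠ 0 := by
  have htri : (Amat n).BlockTriangular (OrderDual.toDual) := by
    intro i j hij
    exact Amat_tri n hij
  rw [Matrix.det_of_lowerTriangular _ htri]
  rw [Finset.prod_ne_zero_iff]
  intro k _
  rw [Amat_diag n hn k]
  have hk : (k:ℕ) < n - 1 := k.isLt
  have h0 : n - 1 - (k:ℕ) ≠ 0 := by omega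
  exact mul_ne_zero (pow_ne_zero _ (by norm_num)) (Nat.cast_ne_zero.mpr h0)


lemma Bmat_Amat (n : ℕ) (hn : 2 ≤ n) : Bmat n * Amat n = 1 :=
  Matrix.nonsing_inv_mul _ (isUnit_iff_ne_zero.2 (Amat_det_ne_zero n hn))

lemma Amat_Bmat (n : ℕ) (hn : 2 ≤ n) : Amat n * Bmat n = 1 :=
  Matrix.mul_nonsing_inv _ (isUnit_iff_ne_zero.2 (Amat_det_ne_zero n hn))

lemma vieta_fin (c : ℕ) :
    (∏ i : Fin c, (X + C (MvPolynomial.X i)) : Polynomial (MvPolynomial (Fin c) ℂ)) =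
      X^c + ∑ i : Fin c, C (MvPolynomial.esymm (Fin c) ℂ ((i:ℕ)+1)) * X^(c - 1 - (i:ℕ)) := by
  rw [MvPolynomial.prod_C_add_X_eq_sum_esymm]
  rw [Fintype.card_fin]
  rw [Finset.sum_range_succ']
  rw [MvPolynomial.esymm_zero, map_one, one_mul, Nat.sub_zero, Finset.sum_range]
  rw [add_comm]
  congr 1
  apply Finset.sum_congr rfl
  intro i _
  rw [show c - ((i:ℕ)+1) = c - 1 - (i:ℕ) from by omega]

/-- The "roots" index type. -/
abbrev Wty (n l : ℕ) := Fin l ⊕ Fin (n - l - 1)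

def emb (n l : ℕ) : Wty n l → (Fin l ⊕ (Fin (n - l - 1) ⊕ Unit)) := Sum.map id Sum.inl

lemma emb_injective (n l : ℕ) : Function.Injective (emb n l) :=
  Sum.map_injective.2 ⟨Function.injective_id, Sum.inl_injective⟩

/-- images of the variables under ψ -/
def psiv (n l : ℕ) : (Fin l ⊕ (Fin (n - l - 1) ⊕ Unit)) → Rring n l :=
  Sum.elim
    (fun i => MvPolynomial.rename Sum.inl (MvPolynomial.esymm (Fin l) ℂ ((i:ℕ)+1)))
    (Sum.elim
      (fun j => MvPolynomial.rename (fun t => Sum.inr (Sum.inl t))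
        (MvPolynomial.esymm (Fin (n - l - 1)) ℂ ((j:ℕ)+1)))
      (fun _ => Svar n l))

def psi (n l : ℕ) : Rring n l →ₐ[ℂ] Rring n l := MvPolynomial.aeval (psiv n l)

def Esym (n l : ℕ) (k : ℕ) : Rring n l :=
  MvPolynomial.rename (emb n l) (MvPolynomial.esymm (Wty n l) ℂ k)

lemma map_psi_fpol (n l : ℕ) :
    Polynomial.map (psi n l).toRingHom (fpol n l) =
      ∏ i : Fin l, (X + C (MvPolynomial.X (Sum.inl i))) := by
  have key : (∏ i : Fin l, (X + C (MvPolynomial.X (Sum.inl i)))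
      : Polynomial (Rring n l)) =
      Polynomial.map (MvPolynomial.rename (Sum.inl : Fin l → Fin l ⊕ (Fin (n-l-1) ⊕ Unit))).toRingHom
        (∏ i : Fin l, (X + C (MvPolynomial.X i))) := by
    rw [Polynomial.map_prod]
    apply Finset.prod_congr rfl
    intro i _
    simp [MvPolynomial.rename_X]
  rw [key, vieta_fin]
  rw [Polynomial.map_add, Polynomial.map_pow, Polynomial.map_X, Polynomial.map_sum]
  unfold fpol
  rw [Polynomial.map_add, Polynomial.map_pow, Polynomial.map_X, Polynomial.map_sum]
  congr 1
  apply Finset.sum_congr rfl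
  intro i _
  rw [Polynomial.map_mul, Polynomial.map_C, Polynomial.map_mul, Polynomial.map_C,
    Polynomial.map_pow, Polynomial.map_X, Polynomial.map_pow, Polynomial.map_X]
  congr 2
  show (psi n l) (MvPolynomial.X (Sum.inl i)) = _
  simp [psi, psiv]

lemma map_psi_gpol (n l : ℕ) :
    Polynomial.map (psi n l).toRingHom (gpol n l) =
      ∏ j : Fin (n - l - 1), (X + C (MvPolynomial.X (Sum.inr (Sum.inl j)))) := by
  have key : (∏ j : Fin (n-l-1), (X + C (MvPolynomial.X (Sum.inr (Sum.inl j))))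
      : Polynomial (Rring n l)) =
      Polynomial.map (MvPolynomial.rename (fun t : Fin (n-l-1) => Sum.inr (Sum.inl t) : Fin (n-l-1) → Fin l ⊕ (Fin (n-l-1) ⊕ Unit))).toRingHom
        (∏ j : Fin (n-l-1), (X + C (MvPolynomial.X j))) := by
    rw [Polynomial.map_prod]
    apply Finset.prod_congr rfl
    intro j _
    simp [MvPolynomial.rename_X]
  rw [key, vieta_fin]
  rw [Polynomial.map_add, Polynomial.map_pow, Polynomial.map_X, Polynomial.map_sum]
  unfold gpol
  rw [Polynomial.map_add, Polynomial.map_pow, Polynomial.map_X, Polynomial.map_sum]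
  congr 1
  apply Finset.sum_congr rfl
  intro j _
  rw [Polynomial.map_mul, Polynomial.map_C, Polynomial.map_mul, Polynomial.map_C,
    Polynomial.map_pow, Polynomial.map_X, Polynomial.map_pow, Polynomial.map_X]
  congr 2
  show (psi n l) (MvPolynomial.X (Sum.inr (Sum.inl j))) = _
  simp [psi, psiv]

lemma map_psi_fg (n l : ℕ) :
    Polynomial.map (psi n l).toRingHom (fpol n l * gpol n l) =
      Polynomial.map (MvPolynomial.rename (emb n l)).toRingHom
        (∏ w : Wty n l, (X + C (MvPolynomial.X w))) := by
  rw [Polynomial.map_mul, map_psi_fpol, map_psi_gpol]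
  rw [Polynomial.map_prod]
  rw [Fintype.prod_sum_type]
  congr 1
  · apply Finset.prod_congr rfl; intro i _; simp [emb, MvPolynomial.rename_X]
  · apply Finset.prod_congr rfl; intro j _; simp [emb, MvPolynomial.rename_X]

lemma card_Wty (n l : ℕ) (hn : 2 ≤ n) (hl : l ≤ n - 1) :
    Fintype.card (Wty n l) = n - 1 := by
  simp [Wty]
  omega

lemma psi_hco (n l : ℕ) (hn : 2 ≤ n) (hl : l ≤ n - 1) (k : Fin (n-1)) :
    psi n l ((fpol n l * gpol n l).coeff (n - 2 - (k:ℕ))) = Esym n l ((k:ℕ)+1) := by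
  have h1 : psi n l ((fpol n l * gpol n l).coeff (n - 2 - (k:ℕ)))
      = (Polynomial.map (psi n l).toRingHom (fpol n l * gpol n l)).coeff (n - 2 - (k:ℕ)) := by
    rw [Polynomial.coeff_map]; rfl
  rw [h1, map_psi_fg, Polynomial.coeff_map]
  have hd : n - 2 - (k:ℕ) ≤ Fintype.card (Wty n l) := by
    rw [card_Wty n l hn hl]; omega
  rw [MvPolynomial.prod_X_add_C_coeff ℂ (Wty n l) _ hd]
  have hk : (k:ℕ) < n - 1 := k.isLt
  rw [show Fintype.card (Wty n l) - (n - 2 - (k:ℕ)) = (k:ℕ)+1 from by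
    rw [card_Wty n l hn hl]; omega]
  rfl

lemma coeff_eq (n l : ℕ) (hn : 2 ≤ n) (Sig : Fin (n-1) → Rring n l)
    (h : sigmaEq n l Sig) (k : Fin (n-1)) :
    ∑ i : Fin (n-1), algebraMap ℂ (Rring n l) (Amat n k i) * Sig i
      = (n : Rring n l) * (fpol n l * gpol n l).coeff (n - 2 - (k:ℕ))
        - algebraMap ℂ (Rring n l) ((n.choose (n - 2 - (k:ℕ)) : ℂ)) := by
  have hk : (k:ℕ) < n - 1 := k.isLt
  set d := n - 2 - (k:ℕ) with hd
  unfold sigmaEq at h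
  rw [mul_assoc, ← Polynomial.C_eq_natCast] at h
  have E0 := congrArg (fun p : Polynomial (Rring n l) => p.coeff d) h
  simp only [Polynomial.coeff_sub, Polynomial.coeff_add, Polynomial.finset_sum_coeff,
    Polynomial.coeff_C_mul, Polynomial.coeff_X_pow, Polynomial.coeff_X_add_one_pow] at E0
  rw [if_neg (show ¬ d = n from by omega)] at E0
  have hgoal : ∀ i : Fin (n-1),
      algebraMap ℂ (Rring n l) (Amat n k i) * Sig i
        = ((-1 : Rring n l)^((i:ℕ)+1) * Sig i) * ((n - ((i:ℕ)+1)).choose d : Rring n l)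
          - ((-1 : Rring n l)^((i:ℕ)+1) * Sig i) * (if d = n - ((i:ℕ)+1) then 1 else 0) := by
    intro i
    have hi : (i:ℕ) < n - 1 := i.isLt
    have hcond : (d = n - ((i:ℕ)+1)) ↔ ((i:ℕ) = (k:ℕ)+1) := by omega
    unfold Amat
    rw [map_mul, map_sub, map_pow, map_neg, map_one, map_natCast]
    rw [if_congr hcond.symm rfl rfl]
    rw [apply_ite (algebraMap ℂ (Rring n l)), map_one, map_zero]
    ring
  rw [Finset.sum_congr rfl (fun i _ => hgoal i), Finset.sum_sub_distrib]
  rw [map_natCast]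
  linear_combination -E0

def binc (n : ℕ) (k : Fin (n-1)) : ℂ := (n.choose (n - 2 - (k:ℕ)) : ℂ)

def wvec (n : ℕ) (k : Fin (n-1)) : ℂ := - ∑ t : Fin (n-1), Bmat n k t * binc n t

lemma Sig_solve (n l : ℕ) (hn : 2 ≤ n) (hBA : Bmat n * Amat n = 1)
    (Sig : Fin (n-1) → Rring n l) (h : sigmaEq n l Sig) (j : Fin (n-1)) :
    Sig j = ∑ k : Fin (n-1), algebraMap ℂ (Rring n l) (Bmat n j k) *
      ((n : Rring n l) * (fpol n l * gpol n l).coeff (n - 2 - (k:ℕ))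
        - algebraMap ℂ (Rring n l) (binc n k)) := by
  have step1 : Sig j = ∑ i : Fin (n-1), algebraMap ℂ (Rring n l) ((Bmat n * Amat n) j i) * Sig i := by
    rw [hBA]
    have : ∀ i : Fin (n-1), algebraMap ℂ (Rring n l) ((1 : Matrix (Fin (n-1)) (Fin (n-1)) ℂ) j i) * Sig i
        = if i = j then Sig i else 0 := by
      intro i
      rw [Matrix.one_apply]
      by_cases hij : j = i
      · simp [hij]
      · simp [hij, Ne.symm hij]
    rw [Finset.sum_congr rfl (fun i _ => this i), Finset.sum_ite_eq' Finset.univ j Sig]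
    simp
  rw [step1]
  have step2 : ∀ i : Fin (n-1), algebraMap ℂ (Rring n l) ((Bmat n * Amat n) j i) * Sig i
      = ∑ k : Fin (n-1), algebraMap ℂ (Rring n l) (Bmat n j k) *
          (algebraMap ℂ (Rring n l) (Amat n k i) * Sig i) := by
    intro i
    rw [Matrix.mul_apply, map_sum, Finset.sum_mul]
    apply Finset.sum_congr rfl
    intro t _
    rw [map_mul]
    ring
  rw [Finset.sum_congr rfl (fun i _ => step2 i), Finset.sum_comm]
  apply Finset.sum_congr rfl
  intro t _
  rw [← Finset.mul_sum, coeff_eq n l hn Sig h t]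
  rfl

lemma psi_Sig (n l : ℕ) (hn : 2 ≤ n) (hl : l ≤ n - 1) (hBA : Bmat n * Amat n = 1)
    (Sig : Fin (n-1) → Rring n l) (h : sigmaEq n l Sig) (j : Fin (n-1)) :
    psi n l (Sig j) = algebraMap ℂ (Rring n l) (wvec n j)
      + ∑ k : Fin (n-1), algebraMap ℂ (Rring n l) ((n:ℂ) * Bmat n j k) * Esym n l ((k:ℕ)+1) := by
  have := congrArg (psi n l) (Sig_solve n l hn hBA Sig h j)
  rw [map_sum] at this
  rw [this]
  have term : ∀ k : Fin (n-1),
      psi n l (algebraMap ℂ (Rring n l) (Bmat n j k) *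
        ((n : Rring n l) * (fpol n l * gpol n l).coeff (n - 2 - (k:ℕ))
          - algebraMap ℂ (Rring n l) (binc n k)))
      = algebraMap ℂ (Rring n l) ((n:ℂ) * Bmat n j k) * Esym n l ((k:ℕ)+1)
        - algebraMap ℂ (Rring n l) (Bmat n j k * binc n k) := by
    intro k
    rw [map_mul, map_sub, map_mul, AlgHom.commutes, AlgHom.commutes, map_natCast]
    rw [psi_hco n l hn hl k]
    rw [map_mul, map_mul, map_natCast]
    ring
  rw [Finset.sum_congr rfl (fun k _ => term k), Finset.sum_sub_distrib]
  rw [← map_sum, wvec, map_neg]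
  ring

lemma card_Wty' (n l : ℕ) (hn : 2 ≤ n) (hl : l ≤ n - 1) :
    Fintype.card (Wty n l) = n - 1 := by
  simp [Wty]; omega

lemma hE0 (n l : ℕ) (hn : 2 ≤ n) (hl : l ≤ n - 1) :
    AlgebraicIndependent ℂ (fun j : Fin (n-1) => MvPolynomial.esymm (Wty n l) ℂ ((j:ℕ)+1)) := by
  rw [algebraicIndependent_iff_injective_aeval]
  have hcard : n - 1 ≤ Fintype.card (Wty n l) := by rw [card_Wty' n l hn hl]
  have hinj := MvPolynomial.esymmAlgHom_injective (σ := Wty n l) ℂ (n := n - 1) hcard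
  intro p q hpq
  apply hinj
  apply Subtype.ext
  rw [MvPolynomial.esymmAlgHom_apply, MvPolynomial.esymmAlgHom_apply]
  exact hpq

def xfam (n l : ℕ) : (Fin (n-1) ⊕ Unit) → Rring n l :=
  Sum.elim (fun j => Esym n l ((j:ℕ)+1)) (fun _ => Svar n l)

lemma hxfam (n l : ℕ) (hn : 2 ≤ n) (hl : l ≤ n - 1) :
    AlgebraicIndependent ℂ (xfam n l) := by
  have hE : AlgebraicIndependent ℂ
      (⇑(MvPolynomial.rename (emb n l) : MvPolynomial (Wty n l) ℂ →ₐ[ℂ] Rring n l) ∘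
        (fun j : Fin (n-1) => MvPolynomial.esymm (Wty n l) ℂ ((j:ℕ)+1))) :=
    (hE0 n l hn hl).map' (MvPolynomial.rename_injective _ (emb_injective n l))
  have hle : Algebra.adjoin ℂ (Set.range
        (⇑(MvPolynomial.rename (emb n l) : MvPolynomial (Wty n l) ℂ →ₐ[ℂ] Rring n l) ∘
          (fun j : Fin (n-1) => MvPolynomial.esymm (Wty n l) ℂ ((j:ℕ)+1))))
      ≤ MvPolynomial.supported ℂ (Set.range (emb n l)) := by
    rw [Algebra.adjoin_le_iff]
    rintro _ ⟨j, rfl⟩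
    rw [SetLike.mem_coe, MvPolynomial.mem_supported]
    refine subset_trans (Finset.coe_subset.2 (MvPolynomial.vars_rename _ _)) ?_
    intro v hv
    simp only [Finset.coe_image, Set.mem_image] at hv
    obtain ⟨w, _, rfl⟩ := hv
    exact Set.mem_range_self w
  have hnotmem : (Sum.inr (Sum.inr ()) : Fin l ⊕ (Fin (n-l-1) ⊕ Unit)) ∉ Set.range (emb n l) := by
    rintro ⟨w, hw⟩
    cases w <;> simp [emb] at hw
  have htrans : Transcendental
      (Algebra.adjoin ℂ (Set.range
        (⇑(MvPolynomial.rename (emb n l) : MvPolynomial (Wty n l) ℂ →ₐ[ℂ] Rring n l) ∘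
          (fun j : Fin (n-1) => MvPolynomial.esymm (Wty n l) ℂ ((j:ℕ)+1)))))
      (Svar n l) :=
    (MvPolynomial.transcendental_supported_X ℂ hnotmem).of_tower_top_of_subalgebra_le hle
  have hopt : AlgebraicIndependent ℂ (fun o : Option (Fin (n-1)) =>
      o.elim (Svar n l) (fun j => Esym n l ((j:ℕ)+1))) := by
    exact (hE.option_iff_transcendental (Svar n l)).2 htrans
  have := (algebraicIndependent_equiv ((Equiv.optionEquivSumPUnit (Fin (n-1))).symm)
      (f := fun o : Option (Fin (n-1)) => o.elim (Svar n l) (fun j => Esym n l ((j:ℕ)+1)))).2 hopt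
  have heq : (fun o : Option (Fin (n-1)) => o.elim (Svar n l) (fun j => Esym n l ((j:ℕ)+1)))
      ∘ ⇑(Equiv.optionEquivSumPUnit (Fin (n-1))).symm = xfam n l := by
    funext s
    cases s with
    | inl j => rfl
    | inr u => rfl
  rwa [heq] at this

def Pfam (n : ℕ) : (Fin (n-1) ⊕ Unit) → MvPolynomial (Fin (n-1) ⊕ Unit) ℂ :=
  Sum.elim (fun k => MvPolynomial.C (wvec n k)
    + ∑ j : Fin (n-1), MvPolynomial.C ((n:ℂ) * Bmat n k j) * MvPolynomial.X (Sum.inl j))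
    (fun _ => MvPolynomial.X (Sum.inr ()))

def Qfam (n : ℕ) : (Fin (n-1) ⊕ Unit) → MvPolynomial (Fin (n-1) ⊕ Unit) ℂ :=
  Sum.elim (fun k => ∑ t : Fin (n-1), MvPolynomial.C ((n:ℂ)⁻¹ * Amat n k t)
      * (MvPolynomial.X (Sum.inl t) - MvPolynomial.C (wvec n t)))
    (fun _ => MvPolynomial.X (Sum.inr ()))

lemma hQP (n : ℕ) (hn : 2 ≤ n) (hBA : Bmat n * Amat n = 1) (s : Fin (n-1) ⊕ Unit) :
    MvPolynomial.aeval (Qfam n) (Pfam n s) = MvPolynomial.X s := by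
  have hn0 : (n:ℂ) ≠ 0 := Nat.cast_ne_zero.mpr (by omega)
  cases s with
  | inr u =>
    cases u
    simp [Pfam, Qfam]
  | inl k =>
    have expand : MvPolynomial.aeval (Qfam n) (Pfam n (Sum.inl k)) =
        MvPolynomial.C (wvec n k) + ∑ j : Fin (n-1), MvPolynomial.C ((n:ℂ) * Bmat n k j) *
          (∑ t : Fin (n-1), MvPolynomial.C ((n:ℂ)⁻¹ * Amat n j t)
            * (MvPolynomial.X (Sum.inl t) - MvPolynomial.C (wvec n t))) := by
      simp [Pfam, Qfam, map_add, map_sum, map_mul, MvPolynomial.aeval_X, MvPolynomial.aeval_C,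
        MvPolynomial.algebraMap_eq]
    rw [expand]
    simp_rw [Finset.mul_sum]
    rw [Finset.sum_comm]
    have inner : ∀ t : Fin (n-1),
        (∑ j : Fin (n-1), MvPolynomial.C ((n:ℂ) * Bmat n k j) *
          (MvPolynomial.C ((n:ℂ)⁻¹ * Amat n j t)
            * ((MvPolynomial.X (Sum.inl t) : MvPolynomial (Fin (n-1) ⊕ Unit) ℂ) - MvPolynomial.C (wvec n t))))
        = MvPolynomial.C ((1 : Matrix (Fin (n-1)) (Fin (n-1)) ℂ) k t)
            * (MvPolynomial.X (Sum.inl t) - MvPolynomial.C (wvec n t)) := by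
      intro t
      rw [← hBA, Matrix.mul_apply]
      rw [map_sum, Finset.sum_mul]
      apply Finset.sum_congr rfl
      intro j _
      rw [← mul_assoc, ← map_mul]
      congr 2
      field_simp
    rw [Finset.sum_congr rfl (fun t _ => inner t)]
    have : ∀ t : Fin (n-1),
        MvPolynomial.C ((1 : Matrix (Fin (n-1)) (Fin (n-1)) ℂ) k t)
            * ((MvPolynomial.X (Sum.inl t) : MvPolynomial (Fin (n-1) ⊕ Unit) ℂ) - MvPolynomial.C (wvec n t))
        = if k = t then ((MvPolynomial.X (Sum.inl t) : MvPolynomial (Fin (n-1) ⊕ Unit) ℂ) - MvPolynomial.C (wvec n t)) else 0 := by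
      intro t
      rw [Matrix.one_apply]
      by_cases hkt : k = t <;> simp [hkt]
    rw [Finset.sum_congr rfl (fun t _ => this t), Finset.sum_ite_eq Finset.univ k]
    simp

lemma hPfam (n : ℕ) (hn : 2 ≤ n) (hBA : Bmat n * Amat n = 1) :
    AlgebraicIndependent ℂ (Pfam n) := by
  rw [algebraicIndependent_iff_injective_aeval]
  have hcomp : (MvPolynomial.aeval (Qfam n)).comp (MvPolynomial.aeval (Pfam n))
      = MvPolynomial.aeval (R := ℂ) MvPolynomial.X := by
    rw [MvPolynomial.comp_aeval]
    congr 1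
    funext s
    exact hQP n hn hBA s
  have hleft : ∀ p : MvPolynomial (Fin (n-1) ⊕ Unit) ℂ,
      MvPolynomial.aeval (Qfam n) (MvPolynomial.aeval (Pfam n) p) = p := by
    intro p
    have := congrArg (fun φ : MvPolynomial (Fin (n-1) ⊕ Unit) ℂ →ₐ[ℂ] MvPolynomial (Fin (n-1) ⊕ Unit) ℂ => φ p) hcomp
    simpa using this
  exact Function.LeftInverse.injective hleft

/-- if `Σ₁, …, Σ_{n−1} ∈ R` satisfy the defining identity and `Σ_n = S`, then
`Σ₁, …, Σ_n` are algebraically independent over ℂ: the ℂ-algebra homomorphism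
`ℂ[y₁, …, y_n] → R`, `y_i ↦ Σ_i`, is injective. -/
theorem stmt13 (n l : ℕ) (hn : 2 ≤ n) (hl : l ≤ n - 1)
    (Sig : Fin (n - 1) → Rring n l) (h : sigmaEq n l Sig) :
    Function.Injective
      (MvPolynomial.aeval (R := ℂ)
        (fun i : Fin n => if h' : (i : ℕ) < n - 1 then Sig ⟨(i : ℕ), h'⟩ else Svar n l) :
        MvPolynomial (Fin n) ℂ →ₐ[ℂ] Rring n l) := by
  have hBA : Bmat n * Amat n = 1 :=
    Matrix.nonsing_inv_mul _ (isUnit_iff_ne_zero.2 (Amat_det_ne_zero n hn))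
  rw [← algebraicIndependent_iff_injective_aeval]
  apply AlgebraicIndependent.of_comp (psi n l)
  have halg : AlgebraicIndependent ℂ
      (fun s : Fin (n-1) ⊕ Unit => MvPolynomial.aeval (xfam n l) (Pfam n s)) :=
    (hxfam n l hn hl).aeval_of_algebraicIndependent (hPfam n hn hBA)
  let e2 : Fin n ≃ (Fin (n-1) ⊕ Unit) :=
    { toFun := fun i => if h' : (i : ℕ) < n - 1 then Sum.inl ⟨(i : ℕ), h'⟩ else Sum.inr ()
      invFun := Sum.elim (fun k => ⟨(k:ℕ), by omega⟩) (fun _ => ⟨n-1, by omega⟩)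
      left_inv := by
        intro i
        by_cases h' : (i : ℕ) < n - 1
        · simp [h']
        · show Sum.elim _ _ (if h' : (i:ℕ) < n - 1 then Sum.inl (⟨(i:ℕ), h'⟩ : Fin (n-1)) else Sum.inr ()) = i
          rw [dif_neg h']
          have : (i : ℕ) = n - 1 := by have := i.isLt; omega
          exact Fin.ext this.symm
      right_inv := by
        rintro (k | u)
        · have hk := k.isLt
          simp [hk]
        · cases u
          have : ¬ (n - 1 < n - 1) := lt_irrefl _
          simp [this] }
  have key : (⇑(psi n l)) ∘ (fun i : Fin n =>
      if h' : (i : ℕ) < n - 1 then Sig ⟨(i : ℕ), h'⟩ else Svar n l)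
      = (fun s : Fin (n-1) ⊕ Unit => MvPolynomial.aeval (xfam n l) (Pfam n s)) ∘ ⇑e2 := by
    funext i
    by_cases h' : (i : ℕ) < n - 1
    · have he2 : e2 i = Sum.inl ⟨(i:ℕ), h'⟩ := by simp [e2, h']
      simp only [Function.comp_apply, he2, dif_pos h']
      rw [psi_Sig n l hn hl hBA Sig h ⟨(i:ℕ), h'⟩]
      simp only [Pfam, Sum.elim_inl, map_add, map_sum, map_mul, MvPolynomial.aeval_C,
        MvPolynomial.aeval_X]
      rfl
    · have he2 : e2 i = Sum.inr () := by simp [e2, h']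
      simp only [Function.comp_apply, he2, dif_neg h']
      simp only [Pfam, Sum.elim_inr, MvPolynomial.aeval_X]
      show psi n l (Svar n l) = xfam n l (Sum.inr ())
      simp [psi, psiv, Svar, xfam]
  rw [key]
  exact (algebraicIndependent_equiv e2).2 halg

end
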